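/- For every non-negative integer n, ∑_{k=1}^{n} (−1)^{k} · C(n,k) · C(2k,k) · H_k/4^k = (1/2^{2n−1}) · C(2n,n) · (H_n − H_{2n}), where C(a,b) denotes the ordinary binomial coefficient. -/

import Mathlib

open Finset

/-- The `n`-th harmonic number `H_n = ∑_{j=1}^n 1/j`, with `H_0 = 0`. -/
noncomputable def H (n : ℕ) : ℝ :=
  ∑ j ∈ Finset.range n, 1 / ((j : ℝ) + 1)

noncomputable def bb (k : ℕ) : ℝ := (-1)^k * ((2*k).choose k : ℝ) / 4^k
noncomputable def cc (n : ℕ) : ℝ := ((2*n).choose n : ℝ) / 4^n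

lemma H_zero : H 0 = 0 := by simp [H]

lemma H_succ (n : ℕ) : H (n+1) = H n + 1/((n:ℝ)+1) := Finset.sum_range_succ _ n

lemma central_succ (k : ℕ) :
    ((k:ℝ) + 1) * ((2*(k+1)).choose (k+1) : ℝ) = 2*(2*k+1) * ((2*k).choose k : ℝ) := by
  have h := Nat.succ_mul_centralBinom_succ k
  have h2 : (((k + 1) * (k+1).centralBinom : ℕ) : ℝ) = ((2 * (2 * k + 1) * k.centralBinom : ℕ) : ℝ) := by
    exact_mod_cast congrArg (Nat.cast (R := ℝ)) h
  unfold Nat.centralBinom at h2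
  push_cast at h2
  linarith [h2]

lemma bb_succ (k : ℕ) : bb (k+1) = -((2*(k:ℝ)+1) / (2*k+2)) * bb k := by
  have h := central_succ k
  unfold bb
  have hk : (2*(k:ℝ)+2) ≠ 0 := by positivity
  have h4k : (4:ℝ)^k ≠ 0 := by positivity
  have h4k1 : (4:ℝ)^(k+1) ≠ 0 := by positivity
  field_simp
  linear_combination ((-1:ℝ)^k * 4^k * (-2)) * h

lemma cc_succ (n : ℕ) : cc (n+1) = (2*(n:ℝ)+1)/(2*n+2) * cc n := by
  have h := central_succ n
  unfold cc
  have hk : (2*(n:ℝ)+2) ≠ 0 := by positivity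
  have h4k : (4:ℝ)^n ≠ 0 := by positivity
  have h4k1 : (4:ℝ)^(n+1) ≠ 0 := by positivity
  field_simp
  linear_combination ((4:ℝ)^n * 2) * h

lemma F_formula (n : ℕ) : ∀ m : ℕ, ∑ j ∈ range (n+1), (n.choose j : ℝ) * bb (j+m)
    = (-1)^m * cc n * cc m * n.factorial * m.factorial / (n+m).factorial := by
  induction n with
  | zero =>
    intro m
    have hm : (m.factorial : ℝ) ≠ 0 := by exact_mod_cast (Nat.factorial_pos m).ne'
    field_simp [bb, cc]
    rw [Finset.sum_range_one]
    simp only [Nat.choose_zero_right, Nat.cast_one, zero_add, one_mul, bb, cc, mul_zero, Nat.choose_self, pow_zero, div_one]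
    ring
  | succ n ih =>
    intro m
    rw [Finset.sum_range_succ' (fun j => ((n+1).choose j : ℝ) * bb (j+m)) (n+1)]
    have split : ∀ j, (((n+1).choose (j+1) : ℕ) : ℝ) * bb (j+1+m)
        = (n.choose j : ℝ) * bb (j+(m+1)) + (n.choose (j+1) : ℝ) * bb ((j+1)+m) := by
      intro j
      rw [Nat.choose_succ_succ]
      push_cast
      have : j + 1 + m = j + (m+1) := by omega
      rw [this]
      ring
    rw [Finset.sum_congr rfl (fun j _ => split j)]
    rw [Finset.sum_add_distrib]
    have h2 : (∑ j ∈ range (n+1), (n.choose (j+1) : ℝ) * bb ((j+1)+m))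
        + ((n+1).choose 0 : ℝ) * bb (0+m)
        = ∑ j ∈ range (n+1), (n.choose j : ℝ) * bb (j+m) := by
      rw [show (((n+1).choose 0 : ℕ) : ℝ) = ((n.choose 0 : ℕ) : ℝ) by norm_num]
      rw [← Finset.sum_range_succ' (fun j => (n.choose j : ℝ) * bb (j+m)) (n+1)]
      rw [Finset.sum_range_succ]
      simp [Nat.choose_eq_zero_of_lt (Nat.lt_succ_self n)]
    rw [add_assoc, h2, ih (m+1), ih m]
    have e1 : n + (m+1) = (n+m)+1 := by omega
    have e2 : (n+1) + m = (n+m)+1 := by omega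
    rw [e1, e2, cc_succ n, cc_succ m, Nat.factorial_succ (n+m), Nat.factorial_succ n,
      Nat.factorial_succ m]
    have hfnm : ((n+m).factorial : ℝ) ≠ 0 := by exact_mod_cast (Nat.factorial_pos _).ne'
    have hfn : ((n).factorial : ℝ) ≠ 0 := by exact_mod_cast (Nat.factorial_pos _).ne'
    have hfm : ((m).factorial : ℝ) ≠ 0 := by exact_mod_cast (Nat.factorial_pos _).ne'
    have h1 : ((n:ℝ)+m+1) ≠ 0 := by positivity
    have h2' : (2*(n:ℝ)+2) ≠ 0 := by positivity
    have h3 : (2*(m:ℝ)+2) ≠ 0 := by positivity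
    push_cast
    field_simp
    ring

lemma F1 (n : ℕ) : ∑ j ∈ range (n+1), (n.choose j : ℝ) * bb (j+1)
    = -(cc n) / (2*((n:ℝ)+1)) := by
  rw [F_formula n 1]
  have hfn : ((n).factorial : ℝ) ≠ 0 := by exact_mod_cast (Nat.factorial_pos _).ne'
  have h1 : ((n:ℝ)+1) ≠ 0 := by positivity
  rw [Nat.factorial_succ n]
  have hcc1 : cc 1 = 1/2 := by norm_num [cc]
  rw [hcc1]
  push_cast
  field_simp
  ring

lemma keyR (n k : ℕ) (h : k ≤ n) :
    ((n:ℝ)+1) * (((n+1).choose (k+1) : ℕ) : ℝ)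
      = ((k:ℝ)+1) * (n.choose k : ℝ) + ((n:ℝ)+(k:ℝ)+2) * (n.choose (k+1) : ℝ) := by
  have e := Nat.choose_succ_right_eq n k
  have e' : ((n.choose (k+1) * (k+1) : ℕ) : ℝ) = ((n.choose k * (n - k) : ℕ) : ℝ) := by
    exact_mod_cast congrArg (Nat.cast (R := ℝ)) e
  rw [Nat.cast_mul, Nat.cast_mul, Nat.cast_sub h] at e'
  rw [Nat.choose_succ_succ]
  push_cast
  push_cast at e'
  simp only [Nat.succ_eq_add_one]
  linear_combination (-1:ℝ)*e'

noncomputable def G (n : ℕ) (k : ℕ) : ℝ := (k:ℝ) * (n.choose (k-1) : ℝ) * bb k / ((n:ℝ)+1)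

lemma bb_zero : bb 0 = 1 := by simp [bb]
lemma bb_one : bb 1 = -(1/2) := by norm_num [bb]

lemma telescope (n k : ℕ) (h : k ≤ n + 1) :
    (((n+1).choose k : ℕ) : ℝ) * bb k
      = (2*(n:ℝ)+1)/(2*n+2) * (n.choose k : ℝ) * bb k + (G n k - G n (k+1)) := by
  have hn1 : ((n:ℝ)+1) ≠ 0 := by positivity
  have h2n : (2*(n:ℝ)+2) ≠ 0 := by positivity
  match k with
  | 0 =>
    simp only [G, Nat.choose_zero_right, Nat.cast_one, Nat.cast_zero]
    rw [bb_zero, bb_one]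
    field_simp
    simp only [Nat.zero_sub, Nat.choose_zero_right, Nat.cast_one, zero_add]
    ring
  | (k+1) =>
    have hk : k ≤ n := by omega
    have hkey := keyR n k hk
    simp only [G, Nat.add_sub_cancel]
    rw [bb_succ (k+1)]
    have h2k : (2*((k:ℝ)+1)+2) ≠ 0 := by positivity
    push_cast
    field_simp
    linear_combination (2 * bb (k+1)) * hkey

lemma abel (n : ℕ) (G : ℕ → ℝ) (hG0 : G 0 = 0) (hGtop : G (n+2) = 0) :
    ∑ k ∈ range (n+2), (G k - G (k+1)) * H k
      = ∑ j ∈ range (n+1), G (j+1) * (1/((j:ℝ)+1)) := by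
  have e : ∀ k, (G k - G (k+1)) * H k = G k * H k - G (k+1) * H k := fun k => by ring
  rw [Finset.sum_congr rfl (fun k _ => e k), Finset.sum_sub_distrib]
  rw [Finset.sum_range_succ' (fun k => G k * H k) (n+1)]
  rw [Finset.sum_range_succ (fun k => G (k+1) * H k) (n+1)]
  rw [hG0, hGtop]
  simp only [zero_mul, add_zero, mul_zero]
  rw [← Finset.sum_sub_distrib]
  congr 1
  funext j
  rw [H_succ j]
  ring

lemma mainB (n : ℕ) : ∑ k ∈ range (n+1), (n.choose k : ℝ) * bb k * H k
    = 2 * cc n * (H n - H (2*n)) := by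
  induction n with
  | zero => simp [H_zero]
  | succ n ih =>
    have hn1 : ((n:ℝ)+1) ≠ 0 := by positivity
    have h2n : (2*(n:ℝ)+2) ≠ 0 := by positivity
    have hstep : ∀ k ∈ range (n+2), ((n+1).choose k : ℝ) * bb k * H k
        = (2*(n:ℝ)+1)/(2*n+2) * ((n.choose k : ℝ) * bb k * H k)
          + (G n k - G n (k+1)) * H k := by
      intro k hk
      have hk' : k ≤ n + 1 := by
        have := Finset.mem_range.mp hk; omega
      have ht := telescope n k hk'
      linear_combination H k * ht
    rw [Finset.sum_congr rfl hstep, Finset.sum_add_distrib, ← Finset.mul_sum]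
    have hG0 : G n 0 = 0 := by simp [G]
    have hGtop : G n (n+2) = 0 := by
      simp [G, Nat.choose_succ_self]
    rw [abel n (G n) hG0 hGtop]
    have hGj : ∀ j ∈ range (n+1), G n (j+1) * (1/((j:ℝ)+1))
        = (n.choose j : ℝ) * bb (j+1) / ((n:ℝ)+1) := by
      intro j _
      have hj1 : ((j:ℝ)+1) ≠ 0 := by positivity
      simp only [G, Nat.add_sub_cancel]
      push_cast
      field_simp
    rw [Finset.sum_congr rfl hGj]
    have hsum : ∑ j ∈ range (n+1), (n.choose j : ℝ) * bb (j+1) / ((n:ℝ)+1)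
        = -(cc n)/(2*((n:ℝ)+1)^2) := by
      rw [← Finset.sum_div, F1 n, div_div]
      ring
    rw [hsum]
    have hfirst : ∑ k ∈ range (n+2), (n.choose k : ℝ) * bb k * H k
        = ∑ k ∈ range (n+1), (n.choose k : ℝ) * bb k * H k := by
      rw [Finset.sum_range_succ]
      simp [Nat.choose_succ_self]
    rw [hfirst, ih]
    rw [cc_succ n, show 2*(n+1) = (2*n+1)+1 by ring, H_succ (2*n+1), H_succ n,
      show (2*n+1) = (2*n)+1 from rfl, H_succ (2*n)]
    have h2n1 : (2*(n:ℝ)+1) ≠ 0 := by positivity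
    push_cast
    field_simp
    ring

theorem stmt_12 (n : ℕ) :
    ∑ k ∈ Finset.Icc 1 n, (-1 : ℝ) ^ k * (n.choose k : ℝ) *
        ((2 * k).choose k : ℝ) * H k / 4 ^ k =
      (1 / (2 : ℝ) ^ (2 * (n : ℤ) - 1)) * ((2 * n).choose n : ℝ) *
        (H n - H (2 * n)) := by
  have hL : ∑ k ∈ Finset.Icc 1 n, (-1 : ℝ) ^ k * (n.choose k : ℝ) *
        ((2 * k).choose k : ℝ) * H k / 4 ^ k
      = ∑ k ∈ range (n+1), (n.choose k : ℝ) * bb k * H k := by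
    have hins : range (n+1) = insert 0 (Finset.Icc 1 n) := by
      ext x
      simp only [Finset.mem_range, Finset.mem_insert, Finset.mem_Icc]
      omega
    rw [hins, Finset.sum_insert (by simp)]
    have h0 : ((n.choose 0 : ℕ) : ℝ) * bb 0 * H 0 = 0 := by
      rw [H_zero]; ring
    rw [h0, zero_add]
    apply Finset.sum_congr rfl
    intro k _
    unfold bb
    ring
  rw [hL, mainB n]
  have hpow : (2:ℝ) ^ (2 * (n:ℤ) - 1) = 4 ^ n / 2 := by
    rw [zpow_sub₀ (by norm_num : (2:ℝ) ≠ 0)]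
    rw [show (2 * (n:ℤ)) = ((2*n : ℕ) : ℤ) by push_cast; ring, zpow_natCast, zpow_one]
    rw [pow_mul]
    norm_num
  rw [hpow]
  have h4 : (4:ℝ)^n ≠ 0 := by positivity
  unfold cc
  field_simp
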